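/- Let f(y) = -½y² (the case ε = -1, i.e. the manifold S_-). For P ∈ ℝ³ and v ∈ ℝ³, let γ_{P,v} : ℝ → ℝ³ be the unique solution of the geodesic system x'' = 0, x̃'' = -2 y x' y', y'' = y (x')² with γ_{P,v}(0) = P and γ_{P,v}'(0) = v (this solution is defined on all of ℝ). Then for every P ∈ ℝ³ the exponential map E_P : ℝ³ → ℝ³ given by E_P(v) := γ_{P,v}(1) is a bijection from ℝ³ onto ℝ³. -/

import Mathlib

open Set

/-- `shAux a t = sinh (a t) / a`, extended by `t` at `a = 0`. -/
noncomputable def shAux (a t : ℝ) : ℝ := if a = 0 then t else Real.sinh (a * t) / a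

lemma shAux_zero (a : ℝ) : shAux a 0 = 0 := by
  unfold shAux; split <;> simp

lemma hasDerivAt_shAux (a t : ℝ) : HasDerivAt (shAux a) (Real.cosh (a * t)) t := by
  rcases eq_or_ne a 0 with h | h
  · subst h
    have he : shAux 0 = fun t : ℝ => t := funext fun s => by simp [shAux]
    rw [he, zero_mul, Real.cosh_zero]
    exact hasDerivAt_id t
  · have he : shAux a = fun t : ℝ => Real.sinh (a * t) / a := funext fun s => by
      simp [shAux, h]
    rw [he]
    have h1 : HasDerivAt (fun t : ℝ => Real.sinh (a * t)) (Real.cosh (a * t) * (a * 1)) t :=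
      HasDerivAt.comp t (Real.hasDerivAt_sinh (a * t)) ((hasDerivAt_id t).const_mul a)
    have h2 := h1.div_const a
    refine h2.congr_deriv ?_
    rw [mul_one, mul_div_assoc, div_self h, mul_one]

lemma hasDerivAt_sinhAux (a t : ℝ) :
    HasDerivAt (fun t : ℝ => Real.sinh (a * t)) (a * Real.cosh (a * t)) t := by
  have h1 : HasDerivAt (fun t : ℝ => Real.sinh (a * t)) (Real.cosh (a * t) * (a * 1)) t :=
    HasDerivAt.comp t (Real.hasDerivAt_sinh (a * t)) ((hasDerivAt_id t).const_mul a)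
  convert h1 using 1
  ring

lemma hasDerivAt_chAux (a t : ℝ) :
    HasDerivAt (fun t : ℝ => Real.cosh (a * t)) (a * Real.sinh (a * t)) t := by
  have h1 : HasDerivAt (fun t : ℝ => Real.cosh (a * t)) (Real.sinh (a * t) * (a * 1)) t :=
    HasDerivAt.comp t (Real.hasDerivAt_cosh (a * t)) ((hasDerivAt_id t).const_mul a)
  convert h1 using 1
  ring

lemma a_mul_sinh (a t : ℝ) : a * Real.sinh (a * t) = a ^ 2 * shAux a t := by
  rcases eq_or_ne a 0 with h | h
  · simp [h]
  · simp only [shAux, if_neg h]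
    field_simp

lemma shAux_one_pos (a : ℝ) : 0 < shAux a 1 := by
  rcases eq_or_ne a 0 with h | h
  · simp [shAux, h]
  · simp only [shAux, if_neg h, mul_one]
    rcases lt_or_gt_of_ne h with ha | ha
    · exact div_pos_of_neg_of_neg (Real.sinh_neg_iff.2 ha) ha
    · exact div_pos (Real.sinh_pos_iff.2 ha) ha

lemma const_of_hasDerivAt_zero {f : ℝ → ℝ} (h : ∀ t, HasDerivAt f 0 t) (s t : ℝ) :
    f s = f t :=
  is_const_of_deriv_eq_zero (fun x => (h x).differentiableAt) (fun x => (h x).deriv) s t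

theorem S_minus_exponential_map_bijective
    (X XT Y X' XT' Y' : (ℝ × ℝ × ℝ) → (ℝ × ℝ × ℝ) → ℝ → ℝ)
    (hX : ∀ P v t, HasDerivAt (X P v) (X' P v t) t)
    (hX' : ∀ P v t, HasDerivAt (X' P v) 0 t)
    (hXT : ∀ P v t, HasDerivAt (XT P v) (XT' P v t) t)
    (hXT' : ∀ P v t, HasDerivAt (XT' P v) (-(2 * Y P v t * X' P v t * Y' P v t)) t)
    (hY : ∀ P v t, HasDerivAt (Y P v) (Y' P v t) t)
    (hY' : ∀ P v t, HasDerivAt (Y' P v) (Y P v t * (X' P v t) ^ 2) t)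
    (hinit : ∀ P v : ℝ × ℝ × ℝ,
      X P v 0 = P.1 ∧ XT P v 0 = P.2.1 ∧ Y P v 0 = P.2.2 ∧
      X' P v 0 = v.1 ∧ XT' P v 0 = v.2.1 ∧ Y' P v 0 = v.2.2)
    (E : (ℝ × ℝ × ℝ) → (ℝ × ℝ × ℝ) → (ℝ × ℝ × ℝ))
    (hE : ∀ P v, E P v = (X P v 1, XT P v 1, Y P v 1)) :
    ∀ P, Function.Bijective (E P) := by
  intro P
  -- Step 1: X' is constant
  have hX'c : ∀ v t, X' P v t = v.1 := by
    intro v t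
    have := const_of_hasDerivAt_zero (hX' P v) t 0
    rw [this, (hinit P v).2.2.2.1]
  -- Step 2: X P v 1 = P.1 + v.1
  have hX1 : ∀ v : ℝ × ℝ × ℝ, X P v 1 = P.1 + v.1 := by
    intro v
    have hd : ∀ t, HasDerivAt (fun s => X P v s - v.1 * s) 0 t := by
      intro t
      have h := (hX P v t).sub ((hasDerivAt_id t).const_mul v.1)
      rw [hX'c v t] at h
      simp only [mul_one, sub_self] at h
      exact h
    have h := const_of_hasDerivAt_zero hd 1 0
    simp only [mul_one, mul_zero, sub_zero] at h
    rw [(hinit P v).1] at h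
    linarith
  -- Step 3: explicit formula for Y on [0,1]
  have hYform : ∀ v : ℝ × ℝ × ℝ, ∀ t ∈ Icc (0:ℝ) 1,
      Y P v t = P.2.2 * Real.cosh (v.1 * t) + v.2.2 * shAux v.1 t := by
    intro v
    set a := v.1 with ha
    set vf : ℝ → ℝ × ℝ → ℝ × ℝ := fun _ p => (p.2, a ^ 2 * p.1) with hvf
    set K : NNReal := Real.toNNReal (max 1 (a ^ 2)) with hK
    have hKcoe : (K : ℝ) = max 1 (a ^ 2) := Real.coe_toNNReal _ (by positivity)
    have hlip : ∀ t, LipschitzWith K (vf t) := by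
      intro t
      apply LipschitzWith.of_dist_le_mul
      intro p q
      rw [hKcoe]
      simp only [hvf, Prod.dist_eq]
      have h1 : dist (a ^ 2 * p.1) (a ^ 2 * q.1) = a ^ 2 * dist p.1 q.1 := by
        rw [Real.dist_eq, Real.dist_eq, ← mul_sub, abs_mul, abs_of_nonneg (sq_nonneg a)]
      rw [h1]
      have hd1 : (0:ℝ) ≤ dist p.1 q.1 := dist_nonneg
      have hd2 : (0:ℝ) ≤ dist p.2 q.2 := dist_nonneg
      apply max_le
      · refine le_trans (le_max_right (dist p.1 q.1) (dist p.2 q.2)) ?_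
        exact le_mul_of_one_le_left (le_max_of_le_left hd1) (le_max_left _ _)
      · exact mul_le_mul (le_max_right _ _) (le_max_left _ _) hd1 (le_max_of_le_left zero_le_one)
    set F := fun t : ℝ => (Y P v t, Y' P v t) with hF
    have hFd : ∀ t, HasDerivAt F (vf t (F t)) t := by
      intro t
      have h2 := hY' P v t
      rw [hX'c v t] at h2
      have h := (hY P v t).prodMk h2
      have heq : vf t (F t) = (Y' P v t, Y P v t * v.1 ^ 2) := by
        simp only [hvf, hF]
        refine Prod.ext_iff.mpr ⟨rfl, mul_comm _ _⟩
      rw [heq]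
      exact h
    set G := fun t : ℝ => (P.2.2 * Real.cosh (a * t) + v.2.2 * shAux a t,
        P.2.2 * (a * Real.sinh (a * t)) + v.2.2 * Real.cosh (a * t)) with hG
    have hGd : ∀ t, HasDerivAt G (vf t (G t)) t := by
      intro t
      have h1 : HasDerivAt (fun t => P.2.2 * Real.cosh (a * t) + v.2.2 * shAux a t)
          (P.2.2 * (a * Real.sinh (a * t)) + v.2.2 * Real.cosh (a * t)) t :=
        ((hasDerivAt_chAux a t).const_mul _).add ((hasDerivAt_shAux a t).const_mul _)
      have h2 : HasDerivAt
          (fun t => P.2.2 * (a * Real.sinh (a * t)) + v.2.2 * Real.cosh (a * t))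
          (P.2.2 * (a * (a * Real.cosh (a * t))) + v.2.2 * (a * Real.sinh (a * t))) t :=
        (((hasDerivAt_sinhAux a t).const_mul a).const_mul _).add
          ((hasDerivAt_chAux a t).const_mul _)
      have h := h1.prodMk h2
      have heq : vf t (G t) = (P.2.2 * (a * Real.sinh (a * t)) + v.2.2 * Real.cosh (a * t),
          P.2.2 * (a * (a * Real.cosh (a * t))) + v.2.2 * (a * Real.sinh (a * t))) := by
        simp only [hvf, hG]
        refine Prod.ext_iff.mpr ⟨rfl, ?_⟩
        linear_combination (-v.2.2) * a_mul_sinh a t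
      rw [heq]
      exact h
    intro t ht
    have key : EqOn F G (Icc 0 1) := by
      apply ODE_solution_unique hlip
      · exact fun s _ => (hFd s).continuousAt.continuousWithinAt
      · exact fun s hs => (hFd s).hasDerivWithinAt
      · exact fun s _ => (hGd s).continuousAt.continuousWithinAt
      · exact fun s hs => (hGd s).hasDerivWithinAt
      · simp only [hF, hG, mul_zero, Real.cosh_zero, Real.sinh_zero, shAux_zero,
          mul_one, add_zero, zero_add, Prod.mk.injEq]
        rw [(hinit P v).2.2.1, (hinit P v).2.2.2.2.2]
        constructor <;> ring
    exact congrArg Prod.fst (key ht)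
  -- Step 4: formula for XT'
  have hXT'f : ∀ (v : ℝ × ℝ × ℝ) t,
      XT' P v t = v.2.1 + v.1 * P.2.2 ^ 2 - v.1 * (Y P v t) ^ 2 := by
    intro v t
    have hFd0 : ∀ t, HasDerivAt (fun s => XT' P v s + v.1 * (Y P v s) ^ 2) 0 t := by
      intro s
      have h1 := hXT' P v s
      rw [hX'c v s] at h1
      have h2 := ((hY P v s).pow 2).const_mul v.1
      have h := h1.add h2
      refine h.congr_deriv ?_
      push_cast
      ring
    have h := const_of_hasDerivAt_zero hFd0 t 0
    rw [(hinit P v).2.2.2.2.1, (hinit P v).2.2.1] at h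
    nlinarith [h]
  -- Step 5: XT P v 1 depends on v.2.1 by a shift
  have hshift : ∀ v : ℝ × ℝ × ℝ, XT P v 1 = XT P (v.1, 0, v.2.2) 1 + v.2.1 := by
    intro v
    have hYeq : ∀ t ∈ Icc (0:ℝ) 1, Y P v t = Y P (v.1, 0, v.2.2) t := by
      intro t ht
      rw [hYform v t ht, hYform (v.1, 0, v.2.2) t ht]
    have key := eq_of_has_deriv_right_eq (a := 0) (b := 1)
      (f := XT P v) (f' := XT' P v)
      (g := fun t => XT P (v.1, 0, v.2.2) t + v.2.1 * t)
      (fun x _ => (hXT P v x).hasDerivWithinAt)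
      (fun x hx => by
        have h := (hXT P (v.1, 0, v.2.2) x).add ((hasDerivAt_id x).const_mul v.2.1)
        have he : XT' P (v.1, 0, v.2.2) x + v.2.1 * 1 = XT' P v x := by
          rw [hXT'f v x, hXT'f (v.1, 0, v.2.2) x, hYeq x (Ico_subset_Icc_self hx)]
          simp
          ring
        rw [← he]
        exact h.hasDerivWithinAt)
      (fun x _ => (hXT P v x).continuousAt.continuousWithinAt)
      (fun x _ => (((hXT P (v.1, 0, v.2.2) x).add
        ((hasDerivAt_id x).const_mul v.2.1)).continuousAt).continuousWithinAt)
      (by show XT P v 0 = XT P (v.1, 0, v.2.2) 0 + v.2.1 * 0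
          rw [(hinit P v).2.1, (hinit P (v.1, 0, v.2.2)).2.1]; ring)
    have := key 1 (by norm_num)
    simpa using this
  -- Closed form of E
  have hEform : ∀ v : ℝ × ℝ × ℝ, E P v =
      (P.1 + v.1, XT P (v.1, 0, v.2.2) 1 + v.2.1,
        P.2.2 * Real.cosh v.1 + v.2.2 * shAux v.1 1) := by
    intro v
    rw [hE, hX1 v, hshift v, hYform v 1 (by norm_num), mul_one]
  -- Bijectivity via an explicit inverse
  refine Function.bijective_iff_has_inverse.mpr
    ⟨fun q => (q.1 - P.1,
        q.2.1 - XT P (q.1 - P.1, 0,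
          (q.2.2 - P.2.2 * Real.cosh (q.1 - P.1)) / shAux (q.1 - P.1) 1) 1,
        (q.2.2 - P.2.2 * Real.cosh (q.1 - P.1)) / shAux (q.1 - P.1) 1), ?_, ?_⟩
  · -- left inverse
    rintro ⟨aa, b, c⟩
    rw [hEform]
    have hsh := (shAux_one_pos aa).ne'
    simp only
    have h1 : P.1 + (aa, b, c).1 - P.1 = aa := by simp
    rw [h1]
    have h2 : ((P.1 + (aa, b, c).1, XT P ((aa, b, c).1, 0, (aa, b, c).2.2) 1 + (aa, b, c).2.1,
        P.2.2 * Real.cosh (aa, b, c).1 + (aa, b, c).2.2 * shAux (aa, b, c).1 1).2.2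
        - P.2.2 * Real.cosh aa) / shAux aa 1 = c := by
      simp only
      field_simp
      ring
    rw [h2]
    simp
  · -- right inverse
    rintro ⟨q1, q2, q3⟩
    rw [hEform]
    have hsh := (shAux_one_pos (q1 - P.1)).ne'
    simp only [Prod.mk.injEq]
    refine ⟨by ring, by ring, ?_⟩
    field_simp
    ring
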